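/- Let P ∈ ℝ^{n×n} be symmetric positive semidefinite satisfying the Lyapunov equation P = MᵀPM + N with N positive definite, and let B ∈ ℝ^{n×p}. Then for any vectors v₀,…,v_{T−1} ∈ ℝᵖ and any positive definite R ∈ ℝ^{p×p}, Σ_{j=0}^{T−1} v_jᵀ(BᵀPB + R)v_j + 2 Σ_{0≤i<j≤T−1} v_iᵀ Bᵀ (Mᵀ)^{j−i} P B v_j ≥ λ_min(R) Σ_{j=0}^{T−1} ‖v_j‖². -/

import Mathlib

open Matrix

lemma dot_transpose_mulVec {m n : ℕ} (A : Matrix (Fin m) (Fin n) ℝ)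
    (x : Fin n → ℝ) (y : Fin m → ℝ) : x ⬝ᵥ (Aᵀ *ᵥ y) = (A *ᵥ x) ⬝ᵥ y := by
  rw [dotProduct_mulVec, vecMul_transpose]

lemma sum_dotProduct' {p : ℕ} {α : Type*} (s : Finset α) (f : α → Fin p → ℝ) (u : Fin p → ℝ) :
    (∑ i ∈ s, f i) ⬝ᵥ u = ∑ i ∈ s, f i ⬝ᵥ u := by
  classical
  induction s using Finset.induction with
  | empty => simp
  | insert _ _ h ih => simp [Finset.sum_insert h, add_dotProduct, ih]

lemma mulVec_sum' {m q : ℕ} {α : Type*} (M : Matrix (Fin m) (Fin q) ℝ) (s : Finset α)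
    (f : α → Fin q → ℝ) : M *ᵥ (∑ i ∈ s, f i) = ∑ i ∈ s, M *ᵥ f i := by
  classical
  induction s using Finset.induction with
  | empty => simp
  | insert _ _ h ih => simp [Finset.sum_insert h, mulVec_add, ih]

lemma quad_lower {p : ℕ} (R : Matrix (Fin p) (Fin p) ℝ) (hR : R.PosDef) (x : Fin p → ℝ) :
    (⨅ k, hR.1.eigenvalues k) * (x ⬝ᵥ x) ≤ x ⬝ᵥ R *ᵥ x := by
  set c := ⨅ k, hR.1.eigenvalues k with hc
  have hsd : (R - c • 1).PosSemidef := by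
    have hspec := hR.1.spectral_theorem
    have hU : (hR.1.eigenvectorUnitary : Matrix (Fin p) (Fin p) ℝ) *
        (star hR.1.eigenvectorUnitary : Matrix (Fin p) (Fin p) ℝ) = 1 :=
      hR.1.eigenvectorUnitary.2.2
    have h1 : R - c • 1 = (hR.1.eigenvectorUnitary : Matrix (Fin p) (Fin p) ℝ) *
        (diagonal (fun i => hR.1.eigenvalues i - c)) *
        (star hR.1.eigenvectorUnitary : Matrix (Fin p) (Fin p) ℝ) := by
      have hd : (diagonal (fun i => hR.1.eigenvalues i - c)) =
          diagonal (RCLike.ofReal ∘ hR.1.eigenvalues) - c • 1 := by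
        ext i j
        by_cases h : i = j <;> simp [diagonal, h, Matrix.smul_apply, Matrix.one_apply]
      rw [Unitary.conjStarAlgAut_apply] at hspec
      rw [hd, Matrix.mul_sub, Matrix.sub_mul, ← hspec]
      congr 1
      rw [Matrix.mul_smul, Matrix.smul_mul, Matrix.mul_one, hU]
    rw [h1]
    apply PosSemidef.mul_mul_conjTranspose_same
    refine posSemidef_diagonal_iff.mpr fun i => ?_
    simp only [sub_nonneg, hc]
    exact ciInf_le (Finite.bddBelow_range _) i
  have h2 := hsd.dotProduct_mulVec_nonneg x
  simp only [star_trivial, sub_mulVec, smul_mulVec, one_mulVec, dotProduct_sub,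
    dotProduct_smul, smul_eq_mul] at h2
  linarith [h2]

noncomputable def traj {n p : ℕ} (M : Matrix (Fin n) (Fin n) ℝ)
    (B : Matrix (Fin n) (Fin p) ℝ) (v : ℕ → Fin p → ℝ) : ℕ → Fin n → ℝ
  | 0 => 0
  | (k+1) => M *ᵥ (traj M B v k) + B *ᵥ (v k)

lemma traj_eq {n p : ℕ} (M : Matrix (Fin n) (Fin n) ℝ)
    (B : Matrix (Fin n) (Fin p) ℝ) (v : ℕ → Fin p → ℝ) (T : ℕ) :
    traj M B v T = ∑ i ∈ Finset.range T, (M ^ (T - 1 - i)) *ᵥ (B *ᵥ v i) := by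
  induction T with
  | zero => simp [traj]
  | succ T ih =>
    show M *ᵥ (traj M B v T) + B *ᵥ (v T) = _
    rw [ih, mulVec_sum', Finset.sum_range_succ]
    congr 1
    · refine Finset.sum_congr rfl fun i hi => ?_
      have hi' : i < T := Finset.mem_range.mp hi
      rw [mulVec_mulVec, show T + 1 - 1 - i = (T - 1 - i) + 1 from by omega, pow_succ']
    · simp

lemma cross_term {n p : ℕ} (M P : Matrix (Fin n) (Fin n) ℝ)
    (B : Matrix (Fin n) (Fin p) ℝ) (v : ℕ → Fin p → ℝ) (T : ℕ) (u : Fin p → ℝ) :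
    (traj M B v T) ⬝ᵥ ((Mᵀ * P * B) *ᵥ u) =
      ∑ i ∈ Finset.range T, v i ⬝ᵥ ((Bᵀ * (Mᵀ) ^ (T - i) * P * B) *ᵥ u) := by
  rw [traj_eq, sum_dotProduct']
  refine Finset.sum_congr rfl fun i hi => ?_
  have hi' : i < T := Finset.mem_range.mp hi
  have h1 : Bᵀ * Mᵀ ^ (T - i) * P * B = Bᵀ * ((M ^ (T - 1 - i))ᵀ * (Mᵀ * P * B)) := by
    rw [transpose_pow, show T - i = (T - 1 - i) + 1 from by omega, pow_succ]
    simp only [Matrix.mul_assoc]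
  rw [h1]
  conv_rhs => rw [← mulVec_mulVec, dot_transpose_mulVec B, ← mulVec_mulVec,
    dot_transpose_mulVec]

lemma key_identity {n p : ℕ} (M P N : Matrix (Fin n) (Fin n) ℝ)
    (B : Matrix (Fin n) (Fin p) ℝ) (hP : Pᵀ = P) (hLyap : P = Mᵀ * P * M + N)
    (v : ℕ → Fin p → ℝ) (T : ℕ) :
    ∑ j ∈ Finset.range T, (B *ᵥ v j) ⬝ᵥ (P *ᵥ (B *ᵥ v j)) +
      2 * ∑ j ∈ Finset.range T, ∑ i ∈ Finset.range j,
        v i ⬝ᵥ ((Bᵀ * (Mᵀ) ^ (j - i) * P * B) *ᵥ v j) =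
    (traj M B v T) ⬝ᵥ (P *ᵥ traj M B v T) +
      ∑ k ∈ Finset.range T, (traj M B v k) ⬝ᵥ (N *ᵥ traj M B v k) := by
  induction T with
  | zero => simp [traj]
  | succ T ih =>
    rw [Finset.sum_range_succ, Finset.sum_range_succ,
      Finset.sum_range_succ (f := fun k => traj M B v k ⬝ᵥ (N *ᵥ traj M B v k))]
    have hx : traj M B v (T+1) = M *ᵥ (traj M B v T) + B *ᵥ (v T) := rfl
    set x := traj M B v T with hxdef
    have hsym : ∀ (a b : Fin n → ℝ), a ⬝ᵥ (P *ᵥ b) = b ⬝ᵥ (P *ᵥ a) := by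
      intro a b
      conv_lhs => rw [← hP]
      rw [dot_transpose_mulVec, dotProduct_comm]
    have hMx : ∀ (a w : Fin n → ℝ), (M *ᵥ a) ⬝ᵥ (P *ᵥ w) = a ⬝ᵥ ((Mᵀ * P) *ᵥ w) := by
      intro a w
      rw [← mulVec_mulVec, dot_transpose_mulVec]
    have hexp : traj M B v (T+1) ⬝ᵥ (P *ᵥ traj M B v (T+1)) =
        x ⬝ᵥ (P *ᵥ x) - x ⬝ᵥ (N *ᵥ x) + 2 * (x ⬝ᵥ ((Mᵀ * P * B) *ᵥ v T)) +
          (B *ᵥ v T) ⬝ᵥ (P *ᵥ (B *ᵥ v T)) := by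
      rw [hx, add_dotProduct, mulVec_add, dotProduct_add, dotProduct_add]
      have e1 : (M *ᵥ x) ⬝ᵥ (P *ᵥ (M *ᵥ x)) = x ⬝ᵥ (P *ᵥ x) - x ⬝ᵥ (N *ᵥ x) := by
        rw [hMx, mulVec_mulVec]
        have hPN : Mᵀ * P * M = P - N := eq_sub_iff_add_eq.mpr hLyap.symm
        rw [hPN, sub_mulVec, dotProduct_sub]
      have e2 : (M *ᵥ x) ⬝ᵥ (P *ᵥ (B *ᵥ v T)) = x ⬝ᵥ ((Mᵀ * P * B) *ᵥ v T) := by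
        rw [hMx, mulVec_mulVec]
      have e3 : (B *ᵥ v T) ⬝ᵥ (P *ᵥ (M *ᵥ x)) = x ⬝ᵥ ((Mᵀ * P * B) *ᵥ v T) := by
        rw [hsym, e2]
      rw [e1, e2, e3]; ring
    rw [hexp, cross_term M P B v T (v T)]
    linarith [ih]

/-- If `P ⪰ 0` satisfies the Lyapunov equation `P = MᵀPM + N` with `N ≻ 0`,
then for any `v₀,…,v_{T−1} ∈ ℝᵖ` and `R ≻ 0`,
`Σ_j v_jᵀ(BᵀPB + R)v_j + 2 Σ_{i<j} v_iᵀ Bᵀ(Mᵀ)^{j−i} P B v_j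
  ≥ λ_min(R) Σ_j ‖v_j‖²`. -/
theorem stmt_18 {n p : ℕ} (M P N : Matrix (Fin n) (Fin n) ℝ)
    (B : Matrix (Fin n) (Fin p) ℝ) (R : Matrix (Fin p) (Fin p) ℝ)
    (hP : P.PosSemidef) (hN : N.PosDef) (hLyap : P = Mᵀ * P * M + N)
    (hR : R.PosDef) (T : ℕ) (v : ℕ → Fin p → ℝ) :
    ∑ j ∈ Finset.range T, v j ⬝ᵥ (Bᵀ * P * B + R).mulVec (v j) +
        2 * ∑ j ∈ Finset.range T, ∑ i ∈ Finset.range j,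
          v i ⬝ᵥ (Bᵀ * (Mᵀ) ^ (j - i) * P * B).mulVec (v j) ≥
      (⨅ k, hR.1.eigenvalues k) * ∑ j ∈ Finset.range T, ∑ i, v j i ^ 2 := by
  have hPsymm : Pᵀ = P := by
    have := hP.1
    simpa [Matrix.IsHermitian, conjTranspose_eq_transpose_of_trivial] using this
  have hsplit : ∀ j, v j ⬝ᵥ (Bᵀ * P * B + R).mulVec (v j) =
      (B *ᵥ v j) ⬝ᵥ (P *ᵥ (B *ᵥ v j)) + v j ⬝ᵥ (R *ᵥ v j) := by
    intro j
    rw [add_mulVec, dotProduct_add]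
    congr 1
    rw [← mulVec_mulVec, ← mulVec_mulVec, dot_transpose_mulVec]
  simp only [hsplit, Finset.sum_add_distrib]
  have hkey := key_identity M P N B hPsymm hLyap v T
  have h1 : 0 ≤ (traj M B v T) ⬝ᵥ (P *ᵥ traj M B v T) := by
    simpa using hP.dotProduct_mulVec_nonneg (traj M B v T)
  have h2 : 0 ≤ ∑ k ∈ Finset.range T, (traj M B v k) ⬝ᵥ (N *ᵥ traj M B v k) := by
    refine Finset.sum_nonneg fun k _ => ?_
    by_cases h : traj M B v k = 0
    · simp [h]
    · have := hN.dotProduct_mulVec_pos h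
      simpa using this.le
  have h3 : (⨅ k, hR.1.eigenvalues k) * ∑ j ∈ Finset.range T, ∑ i, v j i ^ 2 ≤
      ∑ j ∈ Finset.range T, v j ⬝ᵥ (R *ᵥ v j) := by
    rw [Finset.mul_sum]
    refine Finset.sum_le_sum fun j _ => ?_
    have := quad_lower R hR (v j)
    have hdq : v j ⬝ᵥ v j = ∑ i, v j i ^ 2 := by
      simp [dotProduct, pow_two]
    rw [← hdq]
    exact this
  linarith [hkey, h1, h2, h3]
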